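/- Let P' ⊂ P ⊂ pΣ be convex polytopes in ℝᵐ not contained in ∂(pΣ), let z ∈ (ℂ*)ᵐ, and let b_P, b_{P'} be the decay functions defined by b_Q(z) = −⟨q_Q(z), τ_Q(z)⟩ + p log((1+‖z‖²)/(1+‖e^{−τ_Q(z)/2}·z‖²)), where q_Q(z) ∈ Q and τ_Q(z) in the normal cone of Q at q_Q(z) are the unique elements with pμ(e^{−τ_Q(z)/2}·z) = q_Q(z). Then b_{P'}(z) ≥ b_P(z), with equality if and only if q_P(z) ∈ P'. -/

import Mathlib

lemma term_ineq {w v : ℝ} (hw : 0 < w) (hv : 0 < v) :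
    0 ≤ w * (Real.log w - Real.log v) - (w - v) ∧
      (w * (Real.log w - Real.log v) - (w - v) = 0 ↔ w = v) := by
  have hlog : Real.log (v / w) = Real.log v - Real.log w := Real.log_div hv.ne' hw.ne'
  have h3 : w * (v / w - 1) = v - w := by field_simp
  have hr : w * (Real.log v - Real.log w) = -(w * (Real.log w - Real.log v)) := by ring
  constructor
  · have h1 : Real.log (v / w) ≤ v / w - 1 := Real.log_le_sub_one_of_pos (div_pos hv hw)
    have h2 : w * Real.log (v / w) ≤ w * (v / w - 1) := mul_le_mul_of_nonneg_left h1 hw.le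
    rw [hlog, h3] at h2
    linarith [h2, hr]
  · constructor
    · intro h
      by_contra hne
      have hne' : v / w ≠ 1 := by
        intro hc
        exact hne ((div_eq_one_iff_eq hw.ne').1 hc).symm
      have h1 : Real.log (v / w) < v / w - 1 := Real.log_lt_sub_one_of_pos (div_pos hv hw) hne'
      have h2 : w * Real.log (v / w) < w * (v / w - 1) := (mul_lt_mul_iff_right₀ hw).2 h1
      rw [hlog, h3] at h2
      linarith [h2, hr]
    · rintro rfl; ring

lemma kl_ineq (n : ℕ) (u v : Fin n → ℝ) (hu : ∀ j, 0 < u j) (hv : ∀ j, 0 < v j) :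
    0 ≤ Real.log (1 + ∑ j, v j) - Real.log (1 + ∑ j, u j)
        + ∑ j, u j / (1 + ∑ k, u k) * (Real.log (u j) - Real.log (v j)) ∧
      (Real.log (1 + ∑ j, v j) - Real.log (1 + ∑ j, u j)
        + ∑ j, u j / (1 + ∑ k, u k) * (Real.log (u j) - Real.log (v j)) = 0 ↔ u = v) := by
  set U := ∑ j, u j with hU_def
  set V := ∑ j, v j with hV_def
  have hU : (0:ℝ) < 1 + U := by
    have : 0 ≤ U := Finset.sum_nonneg fun j _ => (hu j).le
    linarith
  have hV : (0:ℝ) < 1 + V := by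
    have : 0 ≤ V := Finset.sum_nonneg fun j _ => (hv j).le
    linarith
  set g : Fin n → ℝ := fun j =>
    u j / (1 + U) * (Real.log (u j / (1 + U)) - Real.log (v j / (1 + V)))
      - (u j / (1 + U) - v j / (1 + V)) with hg_def
  set g0 : ℝ := 1 / (1 + U) * (Real.log (1 / (1 + U)) - Real.log (1 / (1 + V)))
      - (1 / (1 + U) - 1 / (1 + V)) with hg0_def
  have hg : ∀ j, 0 ≤ g j ∧ (g j = 0 ↔ u j / (1 + U) = v j / (1 + V)) := fun j =>
    term_ineq (div_pos (hu j) hU) (div_pos (hv j) hV)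
  have hg0 : 0 ≤ g0 ∧ (g0 = 0 ↔ 1 / (1 + U) = 1 / (1 + V)) :=
    term_ineq (div_pos one_pos hU) (div_pos one_pos hV)
  -- rewrite each g j
  have hgj : ∀ j, g j = u j / (1 + U) * (Real.log (u j) - Real.log (v j))
      + (Real.log (1 + V) - Real.log (1 + U)) * (u j / (1 + U))
      - u j / (1 + U) + v j / (1 + V) := by
    intro j
    rw [hg_def]
    simp only
    rw [Real.log_div (hu j).ne' hU.ne', Real.log_div (hv j).ne' hV.ne']
    ring
  have h1 : ∑ j, u j / (1 + U) = U / (1 + U) := by rw [← Finset.sum_div]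
  have h2 : ∑ j, v j / (1 + V) = V / (1 + V) := by rw [← Finset.sum_div]
  have h3 : ∑ j, (Real.log (1 + V) - Real.log (1 + U)) * (u j / (1 + U))
      = (Real.log (1 + V) - Real.log (1 + U)) * (U / (1 + U)) := by
    rw [← Finset.mul_sum, h1]
  have hsum : ∑ j, g j = (∑ j, u j / (1 + U) * (Real.log (u j) - Real.log (v j)))
      + (Real.log (1 + V) - Real.log (1 + U)) * (U / (1 + U)) - U / (1 + U) + V / (1 + V) := by
    calc ∑ j, g j = ∑ j, (u j / (1 + U) * (Real.log (u j) - Real.log (v j))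
        + (Real.log (1 + V) - Real.log (1 + U)) * (u j / (1 + U))
        - u j / (1 + U) + v j / (1 + V)) := Finset.sum_congr rfl fun j _ => hgj j
      _ = _ := by
        rw [Finset.sum_add_distrib, Finset.sum_sub_distrib, Finset.sum_add_distrib, h1, h2, h3]
  have hfracU : U / (1 + U) = 1 - 1 / (1 + U) := by field_simp; ring
  have hfracV : V / (1 + V) = 1 - 1 / (1 + V) := by field_simp; ring
  have hlogU : Real.log (1 / (1 + U)) = -Real.log (1 + U) := by rw [one_div, Real.log_inv]
  have hlogV : Real.log (1 / (1 + V)) = -Real.log (1 + V) := by rw [one_div, Real.log_inv]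
  have hid : Real.log (1 + V) - Real.log (1 + U)
      + ∑ j, u j / (1 + U) * (Real.log (u j) - Real.log (v j)) = g0 + ∑ j, g j := by
    rw [hsum, hg0_def, hlogU, hlogV, hfracU, hfracV]
    ring
  have hsumg : 0 ≤ ∑ j, g j := Finset.sum_nonneg fun j _ => (hg j).1
  constructor
  · rw [hid]; linarith [hg0.1, hsumg]
  · constructor
    · intro h
      rw [hid] at h
      have hg00 : g0 = 0 := by linarith [hg0.1, hsumg]
      have hgsum0 : ∑ j, g j = 0 := by linarith [hg0.1, hsumg]
      have hgj0 : ∀ j, g j = 0 := by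
        have := (Finset.sum_eq_zero_iff_of_nonneg (fun j _ => (hg j).1)).1 hgsum0
        exact fun j => this j (Finset.mem_univ j)
      have hUV : (1 + U) = (1 + V) := by
        have h' : 1 / (1 + U) = 1 / (1 + V) := hg0.2.1 hg00
        have := (div_eq_div_iff hU.ne' hV.ne').1 h'
        linarith
      funext j
      have h' : u j / (1 + U) = v j / (1 + V) := (hg j).2.1 (hgj0 j)
      rw [← hUV] at h'
      have := (div_eq_div_iff hU.ne' hU.ne').1 h'
      exact mul_right_cancel₀ hU.ne' this
    · rintro rfl
      simp [sub_self]
      simp [hU_def, hV_def]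

lemma star_ineq (n : ℕ) (p : ℝ) (hp : 0 < p) (r : Fin n → ℝ) (hr : ∀ j, 0 < r j)
    (τ σ q : Fin n → ℝ)
    (hq : ∀ j, q j = p * (Real.exp (-τ j) * r j / (1 + ∑ k, Real.exp (-τ k) * r k))) :
    ∑ j, τ j * q j + p * Real.log (1 + ∑ j, Real.exp (-τ j) * r j)
      ≤ ∑ j, σ j * q j + p * Real.log (1 + ∑ j, Real.exp (-σ j) * r j) ∧
    (∑ j, σ j * q j + p * Real.log (1 + ∑ j, Real.exp (-σ j) * r j)
      = ∑ j, τ j * q j + p * Real.log (1 + ∑ j, Real.exp (-τ j) * r j) ↔ σ = τ) := by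
  set u : Fin n → ℝ := fun j => Real.exp (-τ j) * r j with hu_def
  set v : Fin n → ℝ := fun j => Real.exp (-σ j) * r j with hv_def
  have hu : ∀ j, 0 < u j := fun j => mul_pos (Real.exp_pos _) (hr j)
  have hv : ∀ j, 0 < v j := fun j => mul_pos (Real.exp_pos _) (hr j)
  obtain ⟨hD, hDeq⟩ := kl_ineq n u v hu hv
  set D := Real.log (1 + ∑ j, v j) - Real.log (1 + ∑ j, u j)
        + ∑ j, u j / (1 + ∑ k, u k) * (Real.log (u j) - Real.log (v j)) with hD_def
  have hστ : ∀ j, σ j - τ j = Real.log (u j) - Real.log (v j) := by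
    intro j
    rw [hu_def, hv_def]
    simp only
    rw [Real.log_mul (Real.exp_ne_zero _) (hr j).ne', Real.log_mul (Real.exp_ne_zero _) (hr j).ne',
      Real.log_exp, Real.log_exp]
    ring
  have hterm : ∀ j, σ j * q j - τ j * q j
      = p * (u j / (1 + ∑ k, u k) * (Real.log (u j) - Real.log (v j))) := by
    intro j
    have : σ j * q j - τ j * q j = (σ j - τ j) * q j := by ring
    rw [this, hστ j, hq j]
    ring
  have hdiff : (∑ j, σ j * q j + p * Real.log (1 + ∑ j, v j))
      - (∑ j, τ j * q j + p * Real.log (1 + ∑ j, u j)) = p * D := by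
    have h1 : ∑ j, σ j * q j - ∑ j, τ j * q j
        = ∑ j, p * (u j / (1 + ∑ k, u k) * (Real.log (u j) - Real.log (v j))) := by
      rw [← Finset.sum_sub_distrib]
      exact Finset.sum_congr rfl fun j _ => hterm j
    rw [hD_def, ← Finset.mul_sum] at *
    linarith [h1]
  have huv_iff : u = v ↔ σ = τ := by
    constructor
    · intro h
      funext j
      have := congrFun h j
      rw [hu_def, hv_def] at this
      simp only at this
      have := mul_right_cancel₀ (hr j).ne' this
      have := Real.exp_eq_exp.1 this
      linarith
    · rintro rfl; rfl
  constructor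
  · nlinarith [mul_nonneg hp.le hD]
  · rw [← huv_iff, ← hDeq]
    constructor
    · intro h
      have : p * D = 0 := by linarith
      exact (mul_eq_zero.1 this).resolve_left hp.ne'
    · intro h
      rw [h] at hdiff
      linarith

/-- monotonicity of the decay function: For convex polytopes
`P' ⊆ P ⊆ pΣ` not contained in `∂(pΣ)` and `z ∈ (ℂ*)ᵐ`, with
`b_Q(z) = −⟨q_Q(z), τ_Q(z)⟩ + p log((1+‖z‖²)/(1+‖e^{−τ_Q(z)/2}·z‖²))`, one has
`b_{P'}(z) ≥ b_P(z)`, with equality iff `q_P(z) ∈ P'`. -/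
theorem decay_function_monotone (m : ℕ) (p : ℝ) (hp : 0 < p)
    (V V' : Finset (Fin m → ℝ)) (hV : V.Nonempty) (hV' : V'.Nonempty)
    (P P' : Set (Fin m → ℝ))
    (hP : P = convexHull ℝ (V : Set (Fin m → ℝ)))
    (hP' : P' = convexHull ℝ (V' : Set (Fin m → ℝ)))
    (hsub : P' ⊆ P)
    (hPS : P ⊆ {x | (∀ j, 0 ≤ x j) ∧ ∑ j, x j ≤ p})
    (hPbd : ¬ P ⊆ frontier {x : Fin m → ℝ | (∀ j, 0 ≤ x j) ∧ ∑ j, x j ≤ p})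
    (hP'bd : ¬ P' ⊆ frontier {x : Fin m → ℝ | (∀ j, 0 ≤ x j) ∧ ∑ j, x j ≤ p})
    (z : Fin m → ℂ) (hz : ∀ j, z j ≠ 0)
    (qP τP qP' τP' : Fin m → ℝ)
    (hqP : qP ∈ P) (hqP' : qP' ∈ P')
    -- `p μ(e^{−τ/2}·z) = q` for each polytope:
    (hμP : ∀ j, p * (‖Complex.exp (-(τP j : ℂ) / 2) * z j‖ ^ 2 /
        (1 + ∑ k, ‖Complex.exp (-(τP k : ℂ) / 2) * z k‖ ^ 2)) = qP j)
    (hμP' : ∀ j, p * (‖Complex.exp (-(τP' j : ℂ) / 2) * z j‖ ^ 2 /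
        (1 + ∑ k, ‖Complex.exp (-(τP' k : ℂ) / 2) * z k‖ ^ 2)) = qP' j)
    -- `τ` lies in the normal cone at `q`:
    (hconeP : ∀ y ∈ P, ∑ j, τP j * y j ≤ ∑ j, τP j * qP j)
    (hconeP' : ∀ y ∈ P', ∑ j, τP' j * y j ≤ ∑ j, τP' j * qP' j)
    (bP bP' : ℝ)
    (hbP : bP = -(∑ j, qP j * τP j) + p * Real.log ((1 + ∑ j, ‖z j‖ ^ 2) /
        (1 + ∑ j, ‖Complex.exp (-(τP j : ℂ) / 2) * z j‖ ^ 2)))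
    (hbP' : bP' = -(∑ j, qP' j * τP' j) + p * Real.log ((1 + ∑ j, ‖z j‖ ^ 2) /
        (1 + ∑ j, ‖Complex.exp (-(τP' j : ℂ) / 2) * z j‖ ^ 2))) :
    bP ≤ bP' ∧ (bP' = bP ↔ qP ∈ P') := by
  -- the squared norms as real exponentials
  have hnorm : ∀ (t : ℝ) (j : Fin m),
      ‖Complex.exp (-(t:ℂ)/2) * z j‖^2 = Real.exp (-t) * ‖z j‖^2 := by
    intro t j
    have h : (-(t:ℂ)/2) = ((-t/2 : ℝ) : ℂ) := by push_cast; ring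
    rw [norm_mul, mul_pow, h, Complex.norm_exp, Complex.ofReal_re,
      sq (Real.exp _), ← Real.exp_add]
    congr 2
    ring
  set r : Fin m → ℝ := fun j => ‖z j‖^2 with hr_def
  have hr : ∀ j, 0 < r j := fun j => pow_pos (norm_pos_iff.2 (hz j)) 2
  simp only [hnorm] at hμP hμP' hbP hbP'
  -- positivity of denominators
  have hpos : ∀ τ : Fin m → ℝ, (0:ℝ) < 1 + ∑ j, Real.exp (-τ j) * r j := by
    intro τ
    have : 0 ≤ ∑ j, Real.exp (-τ j) * r j :=
      Finset.sum_nonneg fun j _ => (mul_pos (Real.exp_pos _) (hr j)).le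
    linarith
  have hRpos : (0:ℝ) < 1 + ∑ j, r j := by
    have : 0 ≤ ∑ j, r j := Finset.sum_nonneg fun j _ => (hr j).le
    linarith
  -- rewrite b as C - Φ
  set C := p * Real.log (1 + ∑ j, r j) with hC_def
  set ΦP := ∑ j, τP j * qP j + p * Real.log (1 + ∑ j, Real.exp (-τP j) * r j) with hΦP_def
  set ΦP' := ∑ j, τP' j * qP' j + p * Real.log (1 + ∑ j, Real.exp (-τP' j) * r j) with hΦP'_def
  have hb1 : bP = C - ΦP := by
    rw [hbP, hΦP_def, hC_def, Real.log_div hRpos.ne' (hpos τP).ne']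
    have : ∑ j, qP j * τP j = ∑ j, τP j * qP j := Finset.sum_congr rfl fun j _ => mul_comm _ _
    rw [this]
    ring
  have hb1' : bP' = C - ΦP' := by
    rw [hbP', hΦP'_def, hC_def, Real.log_div hRpos.ne' (hpos τP').ne']
    have : ∑ j, qP' j * τP' j = ∑ j, τP' j * qP' j := Finset.sum_congr rfl fun j _ => mul_comm _ _
    rw [this]
    ring
  have hqP2 : ∀ j, qP j = p * (Real.exp (-τP j) * r j / (1 + ∑ k, Real.exp (-τP k) * r k)) :=
    fun j => (hμP j).symm
  have hqP'2 : ∀ j, qP' j = p * (Real.exp (-τP' j) * r j / (1 + ∑ k, Real.exp (-τP' k) * r k)) :=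
    fun j => (hμP' j).symm
  -- first chain: ΦP' ≤ Ψ(τP) ≤ ΦP
  obtain ⟨hs1, hs1eq⟩ := star_ineq m p hp r hr τP' τP qP' hqP'2
  have hcone1 : ∑ j, τP j * qP' j ≤ ∑ j, τP j * qP j := hconeP qP' (hsub hqP')
  have hmain : ΦP' ≤ ΦP := by
    rw [hΦP_def, hΦP'_def]
    calc ∑ j, τP' j * qP' j + p * Real.log (1 + ∑ j, Real.exp (-τP' j) * r j)
        ≤ ∑ j, τP j * qP' j + p * Real.log (1 + ∑ j, Real.exp (-τP j) * r j) := hs1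
      _ ≤ ∑ j, τP j * qP j + p * Real.log (1 + ∑ j, Real.exp (-τP j) * r j) := by
          linarith [hcone1]
  refine ⟨by rw [hb1, hb1']; linarith, ?_, ?_⟩
  · -- bP' = bP → qP ∈ P'
    intro heq
    have hΦeq : ΦP' = ΦP := by rw [hb1, hb1'] at heq; linarith
    have hgap : ∑ j, τP j * qP' j + p * Real.log (1 + ∑ j, Real.exp (-τP j) * r j)
        = ∑ j, τP' j * qP' j + p * Real.log (1 + ∑ j, Real.exp (-τP' j) * r j) := by
      linarith [hs1, hcone1, hΦeq, hΦP_def, hΦP'_def]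
    have hττ : τP = τP' := hs1eq.1 hgap
    have hqq : qP = qP' := by
      funext j
      rw [hqP2 j, hqP'2 j, hττ]
    rw [hqq]
    exact hqP'
  · -- qP ∈ P' → bP' = bP
    intro hmem
    obtain ⟨hs2, _⟩ := star_ineq m p hp r hr τP τP' qP hqP2
    have hcone2 : ∑ j, τP' j * qP j ≤ ∑ j, τP' j * qP' j := hconeP' qP hmem
    have : ΦP ≤ ΦP' := by
      rw [hΦP_def, hΦP'_def]
      calc ∑ j, τP j * qP j + p * Real.log (1 + ∑ j, Real.exp (-τP j) * r j)
          ≤ ∑ j, τP' j * qP j + p * Real.log (1 + ∑ j, Real.exp (-τP' j) * r j) := hs2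
        _ ≤ ∑ j, τP' j * qP' j + p * Real.log (1 + ∑ j, Real.exp (-τP' j) * r j) := by
            linarith [hcone2]
    rw [hb1, hb1']
    linarith [hmain]
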